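/- arXiv:2505.16904 — 3 statements merged into one kernel-verified Lean document; each statement's English description precedes it below -/
import Mathlib

section
/- For all real N, P > 0 and parameters m, c, k > 0: N·(N(1-N/k) - mNP/(1+N)) + P·(-cP + mNP/(1+N)) + (1/2)·(N(1+N/k) + mNP/(1+N)) + (1/2)·(cP + mNP/(1+N)) ≤ ((5+6m+c)/4 + 1/(2k))·(1 + N² + P²). -/
theorem rm_monotonicity_condition (m c k N P : ℝ) (hm : 0 < m) (hc : 0 < c) (hk : 0 < k)
    (hN : 0 < N) (hP : 0 < P) :
    N * (N * (1 - N / k) - m * N * P / (1 + N)) +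
        P * (-c * P + m * N * P / (1 + N)) +
        1 / 2 * (N * (1 + N / k) + m * N * P / (1 + N)) +
        1 / 2 * (c * P + m * N * P / (1 + N)) ≤
      ((5 + 6 * m + c) / 4 + 1 / (2 * k)) * (1 + N ^ 2 + P ^ 2) := by
  have h1 : (0:ℝ) < 1 + N := by linarith
  have hQ : m * N * P / (1 + N) ≤ m * P := by
    rw [div_le_iff₀ h1]
    nlinarith
  have hQ0 : 0 ≤ m * N * P / (1 + N) := by positivity
  have hk' : -(N^3)/k + N^2/(2*k) ≤ (1 + N^2 + P^2)/(2*k) := by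
    rw [div_add_div _ _ (ne_of_gt hk) (by positivity), div_le_div_iff₀ (by positivity) (by positivity)]
    nlinarith [sq_nonneg P, mul_pos hk hk, pow_pos hN 3, mul_pos (mul_pos hk hk) hk]
  have hNk : N * (N * (1 - N / k)) = N^2 - N^3/k := by ring
  have expand : N * (N * (1 - N / k) - m * N * P / (1 + N)) +
        P * (-c * P + m * N * P / (1 + N)) +
        1 / 2 * (N * (1 + N / k) + m * N * P / (1 + N)) +
        1 / 2 * (c * P + m * N * P / (1 + N)) =
      (N^2 - N^3/k + N/2 + N^2/(2*k)) - c*P^2 + c*P/2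
        + (m * N * P / (1 + N)) * (P + 1 - N) := by
    field_simp
    ring
  rw [expand]
  have hmain : (m * N * P / (1 + N)) * (P + 1 - N) ≤ m*P*(P+1) := by
    rcases le_or_gt (P + 1 - N) 0 with h | h
    · nlinarith
    · calc (m * N * P / (1 + N)) * (P + 1 - N) ≤ m*P*(P+1-N) := by nlinarith
        _ ≤ m*P*(P+1) := by nlinarith
  have hrhs : ((5 + 6 * m + c) / 4 + 1 / (2 * k)) * (1 + N ^ 2 + P ^ 2)
      = (5 + 6*m + c)/4 * (1 + N^2 + P^2) + (1 + N^2 + P^2)/(2*k) := by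
    field_simp
  rw [hrhs]
  have : N^2 + N/2 - c*P^2 + c*P/2 + m*P*(P+1) ≤ (5 + 6*m + c)/4 * (1 + N^2 + P^2) := by
    nlinarith [sq_nonneg (N - 1), mul_nonneg hc.le (sq_nonneg (P - 1/2)), mul_nonneg hm.le (sq_nonneg (P - 1)), sq_nonneg P, mul_nonneg hm.le (sq_nonneg P)]
  have hk2 : -(N^3)/k + N^2/(2*k) = (N^2 - N^3/k + N/2 + N^2/(2*k)) - (N^2 + N/2) := by ring
  linarith [hk']
end

section
/- Let V(N,P) = (1+N²+P²)^α with α > 2, and let L be the generator of the stochastic Rosenzweig–MacArthur system. Then for all N, P > 0, LV(N,P) ≤ C₁·V(N,P), where C₁ = 3α + 5αm/2 + αc/2 + α/k + α(α-1)(1 + 2/k + 2m + c). -/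
lemma rm_hder (b α : ℝ) (hb : 0 < b) (x : ℝ) :
    HasDerivAt (fun t : ℝ => (b + t ^ 2) ^ α) (α * (b + x ^ 2) ^ (α - 1) * (2 * x)) x := by
  have h1 : HasDerivAt (fun t : ℝ => b + t ^ 2) (2 * x) x := by
    simpa using (hasDerivAt_pow 2 x).const_add b
  have h2 := h1.rpow_const (p := α) (Or.inl (by positivity))
  convert h2 using 1
  ring

lemma rm_deriv1 (b α : ℝ) (hb : 0 < b) (x : ℝ) :
    deriv (fun t : ℝ => (b + t ^ 2) ^ α) x = α * (b + x ^ 2) ^ (α - 1) * (2 * x) :=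
  (rm_hder b α hb x).deriv

lemma rm_deriv2 (b α : ℝ) (hb : 0 < b) (x : ℝ) :
    deriv (deriv (fun t : ℝ => (b + t ^ 2) ^ α)) x =
      α * (α - 1) * (b + x ^ 2) ^ (α - 2) * (2 * x) ^ 2 + α * (b + x ^ 2) ^ (α - 1) * 2 := by
  have hd : deriv (fun t : ℝ => (b + t ^ 2) ^ α)
      = fun t : ℝ => α * ((b + t ^ 2) ^ (α - 1) * (2 * t)) := by
    funext t
    rw [rm_deriv1 b α hb t]; ring
  rw [hd]
  have hf := rm_hder b (α - 1) hb x
  have he : α - 1 - 1 = α - 2 := by ring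
  rw [he] at hf
  have hg : HasDerivAt (fun t : ℝ => 2 * t) 2 x := by
    simpa using (hasDerivAt_id x).const_mul 2
  have := ((hf.mul hg).const_mul α).deriv
  rw [show deriv (fun t : ℝ => α * ((b + t ^ 2) ^ (α - 1) * (2 * t))) x = _ from this]; ring


set_option maxHeartbeats 1000000 in
lemma rm_key (m c k α N P s : ℝ) (hm : 0 < m) (hc : 0 < c) (hk : 0 < k)
    (hα : 2 < α) (hN : 0 < N) (hP : 0 < P) (hs : s = 1 + N ^ 2 + P ^ 2) :
    (N * (1 - N / k) - m * N * P / (1 + N)) * (α * s ^ (α - 1) * (2 * N)) +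
      (-c * P + m * N * P / (1 + N)) * (α * s ^ (α - 1) * (2 * P)) +
      1 / 2 * (N * (1 + N / k) + m * N * P / (1 + N)) *
        (α * (α - 1) * s ^ (α - 2) * (2 * N) ^ 2 + α * s ^ (α - 1) * 2) +
      1 / 2 * (c * P + m * N * P / (1 + N)) *
        (α * (α - 1) * s ^ (α - 2) * (2 * P) ^ 2 + α * s ^ (α - 1) * 2) ≤
      (3 * α + 5 * α * m / 2 + α * c / 2 + α / k +
        α * (α - 1) * (1 + 2 / k + 2 * m + c)) * s ^ α := by
  have h1N : (0:ℝ) < 1 + N := by linarith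
  have hs0 : (0:ℝ) < s := by rw [hs]; positivity
  have hs1 : (1:ℝ) ≤ s := by nlinarith [sq_nonneg N, sq_nonneg P]
  obtain ⟨q, hqe, hq0⟩ : ∃ q : ℝ, q * (1 + N) = m * N * P ∧ 0 ≤ q :=
    ⟨m * N * P / (1 + N), by field_simp, by positivity⟩
  have hqdef : m * N * P / (1 + N) = q := by
    field_simp [eq_comm]; linarith [hqe]
  rw [hqdef]
  set μ₁ : ℝ := N * (1 - N / k) - q with hμ₁
  set μ₂ : ℝ := -c * P + q with hμ₂
  set a₁₁ : ℝ := N * (1 + N / k) + q with ha₁₁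
  set a₂₂ : ℝ := c * P + q with ha₂₂
  -- first-order bound
  have hq1 : 2 * q * (1 + P - N) ≤ 5 * m / 2 * s := by
    have key : (2 * q * (1 + P - N)) * (1 + N) ≤ (5 * m / 2 * s) * (1 + N) := by
      have he : 2 * q * (1 + P - N) * (1 + N) = 2 * (m * N * P) * (1 + P - N) := by
        rw [show 2 * q * (1 + P - N) * (1 + N) = 2 * (q * (1 + N)) * (1 + P - N) from by ring,
          hqe]
      rw [he, hs]
      nlinarith [mul_nonneg hm.le (sq_nonneg (N - P)), mul_nonneg hm.le (sq_nonneg (N + P)),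
        mul_nonneg (mul_nonneg hm.le hN.le) (sq_nonneg (N - P)),
        mul_nonneg (mul_nonneg hm.le hN.le) (sq_nonneg P),
        mul_nonneg (mul_nonneg hm.le hN.le) (sq_nonneg N),
        mul_nonneg hm.le hN.le, mul_nonneg hm.le hP.le,
        mul_nonneg (mul_nonneg hm.le hN.le) hP.le]
    exact le_of_mul_le_mul_right key h1N
  have hp4 : N ^ 2 / k - 2 * N ^ 3 / k ≤ s * (1 / k) := by
    rw [div_sub_div_same, show s * (1 / k) = s / k from by ring, div_le_div_iff_of_pos_right hk]
    nlinarith [pow_pos hN 3, sq_nonneg P]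
  have hA : 2 * N * μ₁ + 2 * P * μ₂ + a₁₁ + a₂₂ ≤ (3 + 5 * m / 2 + c / 2 + 1 / k) * s := by
    have hexp : 2 * N * μ₁ + 2 * P * μ₂ + a₁₁ + a₂₂ =
        2 * N ^ 2 - 2 * N ^ 3 / k + 2 * q * (1 + P - N) - 2 * c * P ^ 2 + N +
          (N ^ 2 / k - 2 * N ^ 3 / k) + c * P + 2 * N ^ 3 / k := by
      rw [hμ₁, hμ₂, ha₁₁, ha₂₂]; field_simp; ring
    rw [hexp]
    have hp2 : 2 * N ^ 2 + N ≤ 3 * s := by nlinarith [sq_nonneg (N - 1), sq_nonneg P]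
    have hp3 : -2 * c * P ^ 2 + c * P ≤ c / 2 * s := by
      nlinarith [mul_nonneg hc.le (sq_nonneg (P - 1)), mul_nonneg hc.le (sq_nonneg P),
        mul_nonneg hc.le (sq_nonneg N)]
    linarith [hq1, hp2, hp3, hp4]
  -- second-order bound
  have hq2 : q ≤ m * s / 2 := by
    have key : q * (1 + N) ≤ (m * s / 2) * (1 + N) := by
      rw [hqe, hs]
      nlinarith [mul_nonneg hm.le (sq_nonneg (N - P)),
        mul_nonneg (mul_nonneg hm.le hN.le) (sq_nonneg (N - P)),
        mul_nonneg (mul_nonneg hm.le hN.le) (sq_nonneg P),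
        mul_nonneg hm.le hN.le]
    exact le_of_mul_le_mul_right key h1N
  have hb2 : 2 * N ^ 4 / k ≤ 2 / k * s ^ 2 := by
    rw [show 2 / k * s ^ 2 = 2 * s ^ 2 / k from by ring, div_le_div_iff_of_pos_right hk]
    nlinarith [sq_nonneg N, sq_nonneg P, sq_nonneg (N ^ 2 + P ^ 2)]
  have hB : 2 * a₁₁ * N ^ 2 + 2 * a₂₂ * P ^ 2 ≤ (1 + 2 / k + 2 * m + c) * s ^ 2 := by
    have hexp : 2 * a₁₁ * N ^ 2 + 2 * a₂₂ * P ^ 2 =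
        2 * N ^ 3 + 2 * N ^ 4 / k + 2 * q * (N ^ 2 + P ^ 2) + 2 * c * P ^ 3 := by
      rw [ha₁₁, ha₂₂]; field_simp; ring
    rw [hexp]
    have hb1 : 2 * N ^ 3 ≤ s ^ 2 := by
      nlinarith [sq_nonneg (N * (N - 1)), sq_nonneg N, sq_nonneg P, sq_nonneg (N ^ 2 + P ^ 2 - N)]
    have hb4 : 2 * c * P ^ 3 ≤ c * s ^ 2 := by
      rw [hs]
      nlinarith [mul_nonneg hc.le (sq_nonneg (P ^ 2 - P)), mul_nonneg hc.le (sq_nonneg P),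
        mul_nonneg hc.le (sq_nonneg N), mul_nonneg hc.le (sq_nonneg (N * P)),
        mul_nonneg hc.le (sq_nonneg (N ^ 2))]
    have hb3 : 2 * q * (N ^ 2 + P ^ 2) ≤ 2 * m * s ^ 2 := by
      have h1 : N ^ 2 + P ^ 2 ≤ s := by rw [hs]; linarith
      have h2 : 0 ≤ N ^ 2 + P ^ 2 := by positivity
      nlinarith [mul_le_mul hq2 h1 h2 (by positivity : (0:ℝ) ≤ m * s / 2)]
    linarith
  -- power manipulation
  have hXs : s ^ (α - 1) * s = s ^ α := by
    rw [← Real.rpow_add_one hs0.ne' (α - 1)]; norm_num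
  have hYs : s ^ (α - 2) * s ^ 2 = s ^ α := by
    rw [pow_two, ← mul_assoc, ← Real.rpow_add_one hs0.ne', ← Real.rpow_add_one hs0.ne',
      show α - 2 + 1 + 1 = α from by ring]
  have hα0 : (0:ℝ) < α := by linarith
  have hα1 : (0:ℝ) < α - 1 := by linarith
  have hX0 : (0:ℝ) < s ^ (α - 1) := Real.rpow_pos_of_pos hs0 _
  have hY0 : (0:ℝ) < s ^ (α - 2) := Real.rpow_pos_of_pos hs0 _
  calc μ₁ * (α * s ^ (α - 1) * (2 * N)) + μ₂ * (α * s ^ (α - 1) * (2 * P)) +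
        1 / 2 * a₁₁ * (α * (α - 1) * s ^ (α - 2) * (2 * N) ^ 2 + α * s ^ (α - 1) * 2) +
        1 / 2 * a₂₂ * (α * (α - 1) * s ^ (α - 2) * (2 * P) ^ 2 + α * s ^ (α - 1) * 2)
      = α * s ^ (α - 1) * (2 * N * μ₁ + 2 * P * μ₂ + a₁₁ + a₂₂) +
        α * (α - 1) * s ^ (α - 2) * (2 * a₁₁ * N ^ 2 + 2 * a₂₂ * P ^ 2) := by ring
    _ ≤ α * s ^ (α - 1) * ((3 + 5 * m / 2 + c / 2 + 1 / k) * s) +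
        α * (α - 1) * s ^ (α - 2) * ((1 + 2 / k + 2 * m + c) * s ^ 2) := by
        have g1 := mul_le_mul_of_nonneg_left hA
          (by positivity : (0:ℝ) ≤ α * s ^ (α - 1))
        have g2 := mul_le_mul_of_nonneg_left hB
          (by positivity : (0:ℝ) ≤ α * (α - 1) * s ^ (α - 2))
        linarith
    _ = (α * (3 + 5 * m / 2 + c / 2 + 1 / k)) * (s ^ (α - 1) * s) +
        (α * (α - 1) * (1 + 2 / k + 2 * m + c)) * (s ^ (α - 2) * s ^ 2) := by ring
    _ = _ := by rw [hXs, hYs]; ring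

theorem rm_generator_lyapunov_bound (m c k α : ℝ) (hm : 0 < m) (hc : 0 < c) (hk : 0 < k)
    (hα : 2 < α) (N P : ℝ) (hN : 0 < N) (hP : 0 < P) :
    let V : ℝ → ℝ → ℝ := fun x y => (1 + x ^ 2 + y ^ 2) ^ α
    let μ₁ : ℝ := N * (1 - N / k) - m * N * P / (1 + N)
    let μ₂ : ℝ := -c * P + m * N * P / (1 + N)
    let a₁₁ : ℝ := N * (1 + N / k) + m * N * P / (1 + N)
    let a₂₂ : ℝ := c * P + m * N * P / (1 + N)
    let C₁ : ℝ := 3 * α + 5 * α * m / 2 + α * c / 2 + α / k +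
      α * (α - 1) * (1 + 2 / k + 2 * m + c)
    μ₁ * deriv (fun x => V x P) N + μ₂ * deriv (fun y => V N y) P +
        1 / 2 * a₁₁ * deriv (deriv (fun x => V x P)) N +
        1 / 2 * a₂₂ * deriv (deriv (fun y => V N y)) P ≤
      C₁ * V N P := by
  intro V μ₁ μ₂ a₁₁ a₂₂ C₁
  simp only [V, μ₁, μ₂, a₁₁, a₂₂, C₁]
  have hPb : (0:ℝ) < 1 + P ^ 2 := by positivity
  have hNb : (0:ℝ) < 1 + N ^ 2 := by positivity
  have eV1 : (fun x : ℝ => (1 + x ^ 2 + P ^ 2) ^ α)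
      = fun x : ℝ => ((1 + P ^ 2) + x ^ 2) ^ α := by
    funext x
    rw [show 1 + x ^ 2 + P ^ 2 = (1 + P ^ 2) + x ^ 2 from by ring]
  rw [eV1, rm_deriv1 _ _ hPb, rm_deriv1 _ _ hNb, rm_deriv2 _ _ hPb, rm_deriv2 _ _ hNb,
    show (1 + P ^ 2) + N ^ 2 = 1 + N ^ 2 + P ^ 2 from by ring]
  exact rm_key m c k α N P (1 + N ^ 2 + P ^ 2) hm hc hk hα hN hP rfl
end

section
/- For all p ≥ 2 and all N, P > 0, x^Tμ(x) + ((p-1)/2)‖σ(x)‖² ≤ C₂(1+N²+P²) with C₂ = 1 + m + ((p-1)/4)(1 + 2m + c) + (p-1)/(2k), where x = (N,P), μ is the drift and ‖σ(x)‖² = N(1+N/k) + mNP/(1+N) + cP + mNP/(1+N). -/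
theorem rm_monotonicity_condition_p (m c k p N P : ℝ) (hm : 0 < m) (hc : 0 < c)
    (hk : 0 < k) (hp : 2 ≤ p) (hN : 0 < N) (hP : 0 < P) :
    N * (N * (1 - N / k) - m * N * P / (1 + N)) +
        P * (-c * P + m * N * P / (1 + N)) +
        (p - 1) / 2 *
          (N * (1 + N / k) + m * N * P / (1 + N) + (c * P + m * N * P / (1 + N))) ≤
      (1 + m + (p - 1) / 4 * (1 + 2 * m + c) + (p - 1) / (2 * k)) *
        (1 + N ^ 2 + P ^ 2) := by
  have h1N : (0:ℝ) < 1 + N := by linarith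
  have hA0 : 0 ≤ m * N * P / (1 + N) := by positivity
  have hA : m * N * P / (1 + N) ≤ m * P := by
    rw [div_le_iff₀ h1N]; nlinarith
  have hq : (0:ℝ) < (p - 1) / 2 := by linarith
  have h3 : 0 ≤ N ^ 3 / k := by positivity
  have hkk : (p - 1) / 2 * (N * (N / k)) ≤ (p - 1) / (2 * k) * (1 + N ^ 2 + P ^ 2) := by
    have h1 : (p - 1) / 2 * (N * (N / k)) = (p - 1) / (2 * k) * N ^ 2 := by
      rw [div_mul_eq_mul_div, div_mul_eq_mul_div,
        div_eq_div_iff (by positivity) (by positivity)]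
      field_simp
    rw [h1]
    have h2 : 0 ≤ (p - 1) / (2 * k) := div_nonneg (by linarith) (by positivity)
    nlinarith [sq_nonneg P]
  set A := m * N * P / (1 + N) with hAdef
  have expand : N * (N * (1 - N / k) - A) + P * (-c * P + A) +
      (p - 1) / 2 * (N * (1 + N / k) + A + (c * P + A)) =
      (N ^ 2 - N ^ 3 / k) - N * A - c * P ^ 2 + P * A +
      (p - 1) / 2 * (N + A + c * P + A) + (p - 1) / 2 * (N * (N / k)) := by
    ring
  rw [expand]
  nlinarith [mul_nonneg hq.le (sq_nonneg (N - 1)),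
    mul_nonneg (mul_nonneg hq.le hm.le) (sq_nonneg (P - 1)),
    mul_nonneg (mul_nonneg hq.le hc.le) (sq_nonneg (P - 1)),
    mul_nonneg (mul_nonneg hq.le hm.le) (sq_nonneg N),
    mul_nonneg (mul_nonneg hq.le hc.le) (sq_nonneg N),
    mul_nonneg hq.le (sq_nonneg P),
    mul_le_mul_of_nonneg_left hA hq.le,
    mul_le_mul_of_nonneg_left hA hP.le,
    mul_nonneg hN.le hA0,
    mul_nonneg hm.le (sq_nonneg N), mul_nonneg hm.le (sq_nonneg P),
    mul_nonneg hc.le (sq_nonneg P), hkk, h3, hm.le]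
end
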